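/- Let G be a simple graph on n vertices with real adjacency matrix A whose walk matrix W_G is invertible. If P is an n×n permutation matrix commuting with A (i.e., PA = AP), then P is the identity matrix. Consequently, the automorphism group of a controllable graph is trivial. -/
import Mathlib


open Matrix

/-- The walk matrix of a graph with adjacency matrix `A` on `n` vertices. -/
noncomputable def walkMatrix {n : ℕ} (A : Matrix (Fin n) (Fin n) ℝ) :
    Matrix (Fin n) (Fin n) ℝ :=
  Matrix.of fun i j => ((A ^ (j : ℕ)) *ᵥ (1 : Fin n → ℝ)) i

lemma permMatrix_apply' {n : ℕ} (σ : Equiv.Perm (Fin n)) (i j : Fin n) :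
    σ.permMatrix ℝ i j = if σ i = j then 1 else 0 := by
  simp [Equiv.Perm.permMatrix, PEquiv.toMatrix_apply, Equiv.toPEquiv_apply]

lemma permMatrix_mulVec_one {n : ℕ} (σ : Equiv.Perm (Fin n)) :
    σ.permMatrix ℝ *ᵥ (1 : Fin n → ℝ) = 1 := by
  funext i
  have h : ∀ x, σ.permMatrix ℝ i x * (1 : Fin n → ℝ) x = if σ i = x then 1 else 0 := by
    intro x; simp [permMatrix_apply', Equiv.toPEquiv_apply]
  simp only [mulVec, dotProduct, h]
  rw [Finset.sum_ite_eq Finset.univ (σ i) (fun _ => (1 : ℝ))]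
  simp

/-- If the walk matrix of `G` is invertible (i.e. `G` is controllable), then every
permutation matrix commuting with the adjacency matrix is the identity; consequently
every automorphism of `G` is the identity. -/
theorem controllable_trivial_automorphisms {n : ℕ}
    (G : SimpleGraph (Fin n)) [DecidableRel G.Adj]
    (hctrl : IsUnit (walkMatrix (G.adjMatrix ℝ))) :
    (∀ P : Matrix (Fin n) (Fin n) ℝ, (∃ σ : Equiv.Perm (Fin n), P = σ.permMatrix ℝ) →
      P * G.adjMatrix ℝ = G.adjMatrix ℝ * P → P = 1) ∧
    (∀ φ : G ≃g G, ∀ v : Fin n, φ v = v) := by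
  set A := G.adjMatrix ℝ with hA
  have key : ∀ P : Matrix (Fin n) (Fin n) ℝ, (∃ σ : Equiv.Perm (Fin n), P = σ.permMatrix ℝ) →
      P * A = A * P → P = 1 := by
    rintro P ⟨σ, rfl⟩ hcomm
    have hpow : ∀ k : ℕ, σ.permMatrix ℝ * A ^ k = A ^ k * σ.permMatrix ℝ := by
      intro k
      induction k with
      | zero => simp
      | succ k ih =>
        rw [pow_succ, ← mul_assoc, ih, mul_assoc, hcomm, ← mul_assoc, ← pow_succ]
    have hW : σ.permMatrix ℝ * walkMatrix A = walkMatrix A := by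
      ext i j
      have h1 : (σ.permMatrix ℝ * walkMatrix A) i j
          = (σ.permMatrix ℝ *ᵥ (A ^ (j : ℕ) *ᵥ (1 : Fin n → ℝ))) i := by
        simp [Matrix.mul_apply, mulVec, dotProduct, walkMatrix]
      rw [h1, mulVec_mulVec, hpow, ← mulVec_mulVec, permMatrix_mulVec_one]
      rfl
    exact hctrl.mul_right_cancel (by rw [hW, one_mul])
  refine ⟨key, fun φ v => ?_⟩
  set σ : Equiv.Perm (Fin n) := φ.toEquiv with hσ
  have hcomm : σ.permMatrix ℝ * A = A * σ.permMatrix ℝ := by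
    ext i j
    simp only [Matrix.mul_apply, permMatrix_apply', ite_mul, mul_ite, one_mul, mul_one,
      zero_mul, mul_zero]
    simp only [show ∀ x : Fin n, (σ x = j) = (x = σ.symm j) from
      fun x => propext (Equiv.apply_eq_iff_eq_symm_apply σ)]
    rw [Finset.sum_ite_eq, Finset.sum_ite_eq', if_pos (Finset.mem_univ _),
      if_pos (Finset.mem_univ _)]
    have hσj : σ (σ.symm j) = j := σ.apply_symm_apply j
    have hadj : G.Adj (σ i) j ↔ G.Adj i (σ.symm j) := by
      conv_lhs => rw [← hσj]
      exact φ.map_adj_iff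
    simp only [hA, SimpleGraph.adjMatrix_apply]
    simp [hadj]
  have hP := key (σ.permMatrix ℝ) ⟨σ, rfl⟩ hcomm
  have := congrFun (congrFun hP v) (σ v)
  rw [permMatrix_apply', if_pos rfl, Matrix.one_apply] at this
  by_contra hne
  rw [if_neg (fun h => hne h.symm)] at this
  exact one_ne_zero this
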